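/- The arithmetic base 𝒜 does not support absurdity: it is not the case that ⊩_𝒜 ⊥; that is, there exists an atomic formula (e.g. S(0) = 0) that is not derivable in 𝒜. -/
import Mathlib


/-- Closed terms of arithmetic: generated from 0 by successor S, + and ·. -/
inductive Term : Type
  | zero : Term
  | S : Term → Term
  | add : Term → Term → Term
  | mul : Term → Term → Term

/-- The numeral n̄ = Sⁿ(0). -/
def numeral : ℕ → Term
  | 0 => Term.zero
  | n + 1 => Term.S (numeral n)

/-- Atomic formulas: equations t = s between closed terms. -/
abbrev Atom : Type := Term × Term

/-- The weight function on closed terms. -/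
def w : Term → ℕ
  | .zero => 0
  | .S t => w t + 1
  | .add t s => w t + w s
  | .mul t s => w t * w s

/-- An atomic rule: finitely many atomic premises and an atomic conclusion. -/
structure Rule : Type where
  prems : List Atom
  concl : Atom

/-- A base is a set of atomic rules. -/
abbrev Base : Type := Set Rule

/-- Derivability of an atom in a base, by composing the rules of the base. -/
inductive Deriv (B : Base) : Atom → Prop
  | step (r : Rule) (hr : r ∈ B) (hp : ∀ a ∈ r.prems, Deriv B a) : Deriv B r.concl

/-- The rules of the arithmetic base 𝒜. -/
inductive ARule : Rule → Prop
  | eq1 (t : Term) : ARule ⟨[], (t, t)⟩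
  | eq2 (t s : Term) : ARule ⟨[(t, s)], (s, t)⟩
  | eq3 (t s u : Term) : ARule ⟨[(t, s), (s, u)], (t, u)⟩
  | pa1 (t : Term) (a : Atom) : ARule ⟨[(Term.S t, Term.zero)], a⟩
  | pa2 (t s : Term) : ARule ⟨[(Term.S t, Term.S s)], (t, s)⟩
  | pa3 (t : Term) : ARule ⟨[], (Term.add t Term.zero, t)⟩
  | pa4 (t s : Term) : ARule ⟨[], (Term.add t (Term.S s), Term.S (Term.add t s))⟩
  | pa5 (t : Term) : ARule ⟨[], (Term.mul t Term.zero, Term.zero)⟩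
  | pa6 (t s : Term) : ARule ⟨[], (Term.mul t (Term.S s), Term.add (Term.mul t s) t)⟩

/-- The arithmetic base 𝒜. -/
def ABase : Base := { r | ARule r }

/-- Closed formulas: atoms, ⊥, implication, and universal quantification
(a quantified formula is given by its family of closed instances). -/
inductive Formula : Type
  | atom : Atom → Formula
  | bot : Formula
  | imp : Formula → Formula → Formula
  | all : (Term → Formula) → Formula

/-- Sandqvist's support relation ⊩_B φ. -/
def Supports (B : Base) : Formula → Prop
  | .atom a => Deriv B a
  | .bot => ∀ a : Atom, Deriv B a
  | .imp φ ψ => ∀ C : Base, B ⊆ C → Supports C φ → Supports C ψ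
  | .all f => ∀ t : Term, Supports B (f t)

/-- Δ ⊩_B φ : for every base C ⊇ B, if C supports every member of Δ then C supports φ. -/
def FinSupports (B : Base) (Δ : Set Formula) (φ : Formula) : Prop :=
  ∀ C : Base, B ⊆ C → (∀ ψ ∈ Δ, Supports C ψ) → Supports C φ

/-- Γ ⊩ φ : Δ ⊩_∅ φ for some finite Δ ⊆ Γ. -/
def Supp (Γ : Set Formula) (φ : Formula) : Prop :=
  ∃ Δ : Set Formula, Δ.Finite ∧ Δ ⊆ Γ ∧ FinSupports ∅ Δ φ

lemma deriv_w_eq : ∀ a, Deriv ABase a → w a.1 = w a.2 := by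
  intro a h
  induction h with
  | step r hr hp ih =>
    cases hr with
    | eq1 t => rfl
    | eq2 t s => exact (ih (t,s) (by simp)).symm
    | eq3 t s u =>
        exact (ih (t,s) (by simp)).trans (ih (s,u) (by simp))
    | pa1 t a =>
        have := ih (Term.S t, Term.zero) (by simp)
        simp [w] at this
    | pa2 t s =>
        have := ih (Term.S t, Term.S s) (by simp)
        simpa [w] using this
    | pa3 t => simp [w]
    | pa4 t s => simp [w]; ring
    | pa5 t => simp [w]
    | pa6 t s => simp [w]; ring

/-- 𝒜 does not support ⊥; that is, some atomic formula
(e.g. S(0) = 0) is not derivable in 𝒜. -/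
theorem ABase_not_bot :
    ¬ Supports ABase Formula.bot ∧
    ¬ Deriv ABase (Term.S Term.zero, Term.zero) := by
  have h2 : ¬ Deriv ABase (Term.S Term.zero, Term.zero) := by
    intro h
    have := deriv_w_eq _ h
    simp [w] at this
  exact ⟨fun h => h2 (h _), h2⟩
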